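/- Let k be a field of characteristic zero, let f ∈ k[X₀, X₁, X₂] be a homogeneous polynomial of degree 5, and let a, b ∈ k³ be linearly independent vectors such that all second-order partial derivatives of f vanish both at a and at b. Then f vanishes identically on the line through the corresponding projective points: f(s·a + t·b) = 0 for all s, t ∈ k. (This is the Bézout-type step showing that a line through two triple points of a plane quintic must be a component of the quintic.) -/

import Mathlib

open MvPolynomial

private lemma weight_one_fin3 (m : Fin 3 →₀ ℕ) :
    (Finsupp.weight 1) m = m 0 + m 1 + m 2 := by
  simp [Finsupp.weight_apply, Finsupp.sum_fintype, Fin.sum_univ_three]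

private lemma euler_monomial {k : Type*} [CommRing k] (a : Fin 3 → k) (m : Fin 3 →₀ ℕ) (c : k) :
    ∑ i : Fin 3, a i * eval a (pderiv i (monomial m c))
      = ((m 0 + m 1 + m 2 : ℕ) : k) * eval a (monomial m c) := by
  simp only [pderiv_monomial, eval_monomial, Finsupp.prod_pow, Fin.prod_univ_three,
    Fin.sum_univ_three, Finsupp.coe_tsub, Pi.sub_apply, Finsupp.single_apply,
    if_true, show ((0:Fin 3) = 1) = False by simp, show ((0:Fin 3) = 2) = False by simp,
    show ((1:Fin 3) = 0) = False by simp, show ((1:Fin 3) = 2) = False by simp,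
    show ((2:Fin 3) = 0) = False by simp, show ((2:Fin 3) = 1) = False by simp,
    if_false, Nat.sub_zero]
  cases h0 : m 0 <;> cases h1 : m 1 <;> cases h2 : m 2 <;>
    · simp only [h0, h1, h2, Nat.succ_sub_one, Nat.cast_zero, Nat.cast_succ, Nat.cast_add]
      push_cast
      ring

private lemma euler_aux {k : Type*} [CommRing k] (n : ℕ) (f : MvPolynomial (Fin 3) k)
    (hf : f.IsHomogeneous n) (a : Fin 3 → k) :
    ∑ i : Fin 3, a i * eval a (pderiv i f) = (n : k) * eval a f := by
  conv_lhs => rw [f.as_sum]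
  conv_rhs => rw [f.as_sum]
  simp only [map_sum, Finset.mul_sum]
  rw [Finset.sum_comm]
  refine Finset.sum_congr rfl fun m hm => ?_
  have hdeg : m 0 + m 1 + m 2 = n := by
    rw [← weight_one_fin3 m]
    exact hf (mem_support_iff.mp hm)
  rw [← hdeg]
  exact euler_monomial a m (coeff m f)

private lemma eval_smul_aux {k : Type*} [CommRing k] (n : ℕ) (f : MvPolynomial (Fin 3) k)
    (hf : f.IsHomogeneous n) (c : k) (x : Fin 3 → k) :
    eval (c • x) f = c ^ n * eval x f := by
  conv_lhs => rw [f.as_sum]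
  conv_rhs => rw [f.as_sum]
  simp only [map_sum, Finset.mul_sum]
  refine Finset.sum_congr rfl fun m hm => ?_
  have hdeg : m 0 + m 1 + m 2 = n := by
    rw [← weight_one_fin3 m]
    exact hf (mem_support_iff.mp hm)
  simp only [eval_monomial, Finsupp.prod_pow, Fin.prod_univ_three, Pi.smul_apply,
    smul_eq_mul, ← hdeg, pow_add]
  ring

private lemma derivative_aeval {k : Type*} [CommRing k] (f : MvPolynomial (Fin 3) k)
    (v : Fin 3 → Polynomial k) :
    Polynomial.derivative (aeval v f)
      = ∑ i : Fin 3, aeval v (pderiv i f) * Polynomial.derivative (v i) := by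
  induction f using MvPolynomial.induction_on with
  | C r => simp
  | add p q hp hq => simp [hp, hq, map_add, add_mul, Finset.sum_add_distrib]
  | mul_X p j hp =>
      classical
      rw [map_mul, aeval_X, Polynomial.derivative_mul, hp]
      have h2 : ∀ i : Fin 3, pderiv i (p * X j) = pderiv i p * X j + p * pderiv i (X j) :=
        fun i => pderiv_mul
      simp only [h2, map_add, map_mul, aeval_X, add_mul, Finset.sum_add_distrib]
      congr 1
      · rw [Finset.sum_mul]
        exact Finset.sum_congr rfl fun i _ => by ring
      · rw [Finset.sum_eq_single j]
        · simp
        · intro i _ hij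
          simp [pderiv_X, Pi.single_eq_of_ne' hij]
        · simp
  
private lemma eval_aeval_line {k : Type*} [CommRing k] (f : MvPolynomial (Fin 3) k)
    (v : Fin 3 → Polynomial k) (u : k) :
    Polynomial.eval u (aeval v f) = eval (fun i => (v i).eval u) f := by
  induction f using MvPolynomial.induction_on with
  | C r => simp
  | add p q hp hq => simp [hp, hq]
  | mul_X p j hp => simp [hp]

private lemma pderiv_isHomogeneous {k : Type*} [CommRing k] (n : ℕ) (f : MvPolynomial (Fin 3) k)
    (hf : f.IsHomogeneous (n + 1)) (i : Fin 3) : (pderiv i f).IsHomogeneous n := by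
  rw [f.as_sum, map_sum]
  apply IsHomogeneous.sum
  intro m hm
  rw [pderiv_monomial]
  rcases Nat.eq_zero_or_pos (m i) with h | h
  · rw [h]
    simp only [Nat.cast_zero, mul_zero, monomial_zero]
    exact isHomogeneous_zero _ _ _
  · apply isHomogeneous_monomial
    have hdeg : m 0 + m 1 + m 2 = n + 1 := by
      rw [← weight_one_fin3 m]; exact hf (mem_support_iff.mp hm)
    have hle : Finsupp.single i 1 ≤ m := by
      rw [Finsupp.single_le_iff]; exact h
    have hadd : m - Finsupp.single i 1 + Finsupp.single i 1 = m := tsub_add_cancel_of_le hle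
    have hw : (Finsupp.weight 1) (m - Finsupp.single i 1) + 1 = n + 1 := by
      have h2 := congrArg (Finsupp.weight (1 : Fin 3 → ℕ)) hadd
      rw [map_add] at h2
      have hs : (Finsupp.weight (1 : Fin 3 → ℕ)) (Finsupp.single i 1) = 1 := by
        simp [Finsupp.weight_apply]
      rw [hs] at h2
      rw [h2, weight_one_fin3, hdeg]
    have hd : Finsupp.degree (m - Finsupp.single i 1) = (Finsupp.weight 1) (m - Finsupp.single i 1) := by
      rw [Finsupp.degree_eq_weight_one]; rfl
    omega

private lemma first_deriv_zero {k : Type*} [Field k] [CharZero k] (f : MvPolynomial (Fin 3) k)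
    (hhom : f.IsHomogeneous 5) (a : Fin 3 → k)
    (ha : ∀ i j : Fin 3, eval a (pderiv i (pderiv j f)) = 0) (j : Fin 3) :
    eval a (pderiv j f) = 0 := by
  have h4 := euler_aux 4 (pderiv j f) (pderiv_isHomogeneous 4 f hhom j) a
  simp only [ha, mul_zero, Finset.sum_const_zero] at h4
  have : (4 : k) ≠ 0 := by norm_num
  rcases mul_eq_zero.mp h4.symm with h | h
  · exact absurd h (by norm_num)
  · exact h

private lemma value_zero {k : Type*} [Field k] [CharZero k] (f : MvPolynomial (Fin 3) k)
    (hhom : f.IsHomogeneous 5) (a : Fin 3 → k)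
    (ha : ∀ i j : Fin 3, eval a (pderiv i (pderiv j f)) = 0) :
    eval a f = 0 := by
  have h5 := euler_aux 5 f hhom a
  simp only [first_deriv_zero f hhom a ha, mul_zero, Finset.sum_const_zero] at h5
  have : (5 : k) ≠ 0 := by norm_num
  field_simp at h5
  rcases mul_eq_zero.mp h5.symm with h | h
  · exact absurd h (by norm_num)
  · exact h

private lemma natDegree_aeval_le {k : Type*} [Field k] (f : MvPolynomial (Fin 3) k)
    (hhom : f.IsHomogeneous 5) (a b : Fin 3 → k) :
    (aeval (fun i => Polynomial.C (a i) + Polynomial.C (b i) * Polynomial.X) f).natDegree ≤ 5 := by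
  set v : Fin 3 → Polynomial k := fun i => Polynomial.C (a i) + Polynomial.C (b i) * Polynomial.X
    with hv
  conv_lhs => rw [f.as_sum, map_sum]
  apply Polynomial.natDegree_sum_le_of_forall_le
  intro m hm
  have hdeg : m 0 + m 1 + m 2 = 5 := by
    rw [← weight_one_fin3 m]; exact hhom (mem_support_iff.mp hm)
  rw [aeval_monomial]
  refine Polynomial.natDegree_mul_le.trans ?_
  have h0 : (algebraMap k (Polynomial k) (coeff m f)).natDegree = 0 := Polynomial.natDegree_C _
  rw [h0, zero_add]
  have hbase : ∀ i : Fin 3, (v i).natDegree ≤ 1 := by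
    intro i
    refine (Polynomial.natDegree_add_le _ _).trans ?_
    simp only [Polynomial.natDegree_C, max_le_iff]
    exact ⟨Nat.zero_le _, (Polynomial.natDegree_C_mul_le _ _).trans Polynomial.natDegree_X_le⟩
  rw [Finsupp.prod_pow]
  refine (Polynomial.natDegree_prod_le _ _).trans ?_
  calc ∑ i : Fin 3, ((v i) ^ m i).natDegree
      ≤ ∑ i : Fin 3, m i * 1 := by
        refine Finset.sum_le_sum fun i _ => ?_
        exact Polynomial.natDegree_pow_le.trans (Nat.mul_le_mul_left _ (hbase i))
    _ ≤ 5 := by rw [Fin.sum_univ_three]; omega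

private lemma coeffs_low {k : Type*} [Field k] [CharZero k] (f : MvPolynomial (Fin 3) k)
    (hhom : f.IsHomogeneous 5) (a b : Fin 3 → k)
    (ha : ∀ i j : Fin 3, eval a (pderiv i (pderiv j f)) = 0) :
    ∀ n ≤ 2,
      (aeval (fun i => Polynomial.C (a i) + Polynomial.C (b i) * Polynomial.X) f).coeff n = 0 := by
  set v : Fin 3 → Polynomial k := fun i => Polynomial.C (a i) + Polynomial.C (b i) * Polynomial.X
    with hv
  set g := aeval v f with hg
  have hv0 : ∀ i, (v i).eval 0 = a i := by intro i; simp [hv]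
  have hdv : ∀ i, Polynomial.derivative (v i) = Polynomial.C (b i) := by intro i; simp [hv]
  have hfun : (fun i => (v i).eval 0) = a := funext hv0
  have hc0 : g.coeff 0 = 0 := by
    rw [Polynomial.coeff_zero_eq_eval_zero, eval_aeval_line, hfun, value_zero f hhom a ha]
  have hder : Polynomial.derivative g = ∑ i : Fin 3, aeval v (pderiv i f) * Polynomial.C (b i) := by
    rw [hg, derivative_aeval]
    exact Finset.sum_congr rfl fun i _ => by rw [hdv]
  have hder0 : (Polynomial.derivative g).eval 0 = 0 := by
    rw [hder]
    simp only [Polynomial.eval_finset_sum, Polynomial.eval_mul, Polynomial.eval_C,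
      eval_aeval_line, hfun]
    simp [first_deriv_zero f hhom a ha]
  have hc1 : g.coeff 1 = 0 := by
    have := Polynomial.coeff_derivative g 0
    rw [← Polynomial.coeff_zero_eq_eval_zero] at hder0
    rw [hder0] at this
    simpa using this.symm
  have hder2 : (Polynomial.derivative (Polynomial.derivative g)).eval 0 = 0 := by
    rw [hder, map_sum]
    have : ∀ i : Fin 3, Polynomial.derivative (aeval v (pderiv i f) * Polynomial.C (b i))
        = (∑ j : Fin 3, aeval v (pderiv j (pderiv i f)) * Polynomial.C (b j)) * Polynomial.C (b i) := by
      intro i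
      rw [Polynomial.derivative_mul, Polynomial.derivative_C, mul_zero, add_zero,
        derivative_aeval]
      refine congrArg (· * Polynomial.C (b i)) ?_
      exact Finset.sum_congr rfl fun j _ => by rw [hdv]
    simp only [this, Polynomial.eval_finset_sum, Polynomial.eval_mul, Polynomial.eval_C,
      Finset.sum_mul, eval_aeval_line, hfun]
    simp only [ha, zero_mul, Finset.sum_const_zero]
  have hc2 : g.coeff 2 = 0 := by
    have h1 := Polynomial.coeff_derivative (Polynomial.derivative g) 0
    have h2 := Polynomial.coeff_derivative g 1
    rw [← Polynomial.coeff_zero_eq_eval_zero] at hder2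
    rw [hder2] at h1
    rw [h2] at h1
    have h3 : g.coeff 2 * 2 = 0 := by linear_combination -h1
    exact (mul_eq_zero.mp h3).resolve_right (by norm_num)
  intro n hn
  interval_cases n
  · exact hc0
  · exact hc1
  · exact hc2

private lemma line_eval_zero {k : Type*} [Field k] [CharZero k] (f : MvPolynomial (Fin 3) k)
    (hhom : f.IsHomogeneous 5) (a b : Fin 3 → k)
    (ha : ∀ i j : Fin 3, eval a (pderiv i (pderiv j f)) = 0)
    (hb : ∀ i j : Fin 3, eval b (pderiv i (pderiv j f)) = 0) :
    ∀ u : k, eval (a + u • b) f = 0 := by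
  set v : Fin 3 → Polynomial k := fun i => Polynomial.C (a i) + Polynomial.C (b i) * Polynomial.X
    with hv
  set w : Fin 3 → Polynomial k := fun i => Polynomial.C (b i) + Polynomial.C (a i) * Polynomial.X
    with hw
  set g := aeval v f with hg
  set h := aeval w f with hh
  have hgev : ∀ u : k, g.eval u = eval (a + u • b) f := by
    intro u
    rw [hg, eval_aeval_line]
    have hfn : (fun i => (v i).eval u) = a + u • b := by
      funext i
      simp only [hv, Polynomial.eval_add, Polynomial.eval_C, Polynomial.eval_mul,
        Polynomial.eval_X, Pi.add_apply, Pi.smul_apply, smul_eq_mul]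
      ring
    rw [hfn]
  have hhev : ∀ u : k, h.eval u = eval (b + u • a) f := by
    intro u
    rw [hh, eval_aeval_line]
    have hfn : (fun i => (w i).eval u) = b + u • a := by
      funext i
      simp only [hw, Polynomial.eval_add, Polynomial.eval_C, Polynomial.eval_mul,
        Polynomial.eval_X, Pi.add_apply, Pi.smul_apply, smul_eq_mul]
      ring
    rw [hfn]
  have hdg : g.natDegree ≤ 5 := natDegree_aeval_le f hhom a b
  have hdh : h.natDegree ≤ 5 := natDegree_aeval_le f hhom b a
  have hcg : ∀ n ≤ 2, g.coeff n = 0 := coeffs_low f hhom a b ha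
  have hch : ∀ n ≤ 2, h.coeff n = 0 := coeffs_low f hhom b a hb
  set g' : Polynomial k := ∑ j ∈ Finset.range 6, Polynomial.C (h.coeff (5 - j)) * Polynomial.X ^ j
    with hg'
  have hagree : ∀ u : k, u ≠ 0 → g.eval u = g'.eval u := by
    intro u hu
    have hsm : u • (u⁻¹ • a + b) = a + u • b := by
      rw [smul_add, smul_smul, mul_inv_cancel₀ hu, one_smul]
    have e1 : g.eval u = u ^ 5 * h.eval u⁻¹ := by
      rw [hgev, hhev, ← hsm, eval_smul_aux 5 f hhom]
      rw [add_comm (u⁻¹ • a) b]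
    have e2 : h.eval u⁻¹ = ∑ i ∈ Finset.range 6, h.coeff i * u⁻¹ ^ i :=
      Polynomial.eval_eq_sum_range' (lt_of_le_of_lt hdh (by norm_num)) _
    rw [e1, e2, Finset.mul_sum]
    have e3 : g'.eval u = ∑ j ∈ Finset.range 6, h.coeff (5 - j) * u ^ j := by
      rw [hg']
      simp [Polynomial.eval_finset_sum]
    rw [e3, ← Finset.sum_range_reflect (fun i => u ^ 5 * (h.coeff i * u⁻¹ ^ i)) 6]
    refine Finset.sum_congr rfl fun j hj => ?_
    have hj5 : j ≤ 5 := by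
      have := Finset.mem_range.mp hj; omega
    have h65 : (6 : ℕ) - 1 - j = 5 - j := by omega
    rw [h65]
    have hpow : u ^ 5 * u⁻¹ ^ (5 - j) = u ^ j := by
      rw [inv_pow, mul_comm, inv_mul_eq_iff_eq_mul₀ (pow_ne_zero _ hu), ← pow_add]
      congr 1
      omega
    linear_combination h.coeff (5 - j) * hpow
  have hsub : g - g' = 0 := by
    apply Polynomial.eq_zero_of_infinite_isRoot
    apply Set.Infinite.mono (s := ({0}ᶜ : Set k))
    · intro x hx
      have hx0 : x ≠ 0 := hx
      simp only [Set.mem_setOf_eq, Polynomial.IsRoot, Polynomial.eval_sub,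
        hagree x hx0, sub_self]
    · exact Set.Finite.infinite_compl (Set.finite_singleton 0)
  have hgg' : g = g' := sub_eq_zero.mp hsub
  have hg'c : ∀ n : ℕ, g'.coeff n = if n ∈ Finset.range 6 then h.coeff (5 - n) else 0 := by
    intro n
    rw [hg', Polynomial.finset_sum_coeff]
    simp [Polynomial.coeff_C_mul, Polynomial.coeff_X_pow, Finset.sum_ite_eq]
  have hg0 : g = 0 := by
    ext n
    rw [Polynomial.coeff_zero]
    by_cases h6 : 6 ≤ n
    · exact Polynomial.coeff_eq_zero_of_natDegree_lt (lt_of_le_of_lt hdg (by omega))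
    · by_cases h2 : n ≤ 2
      · exact hcg n h2
      · rw [hgg', hg'c n, if_pos (Finset.mem_range.mpr (by omega))]
        exact hch (5 - n) (by omega)
  intro u
  rw [← hgev u, hg0, Polynomial.eval_zero]

/-- If a plane quintic (over a field of characteristic zero) has multiplicity
at least `3` at two distinct projective points (spanned by linearly independent
vectors `a`, `b`), i.e. all second-order partial derivatives of `f` vanish at
`a` and at `b`, then `f` vanishes identically on the line through these two
points. -/
theorem quintic_vanishes_on_line_through_two_triple_points
    (k : Type*) [Field k] [CharZero k]
    (f : MvPolynomial (Fin 3) k) (hhom : f.IsHomogeneous 5)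
    (a b : Fin 3 → k) (hab : LinearIndependent k ![a, b])
    (ha : ∀ i j : Fin 3, eval a (pderiv i (pderiv j f)) = 0)
    (hb : ∀ i j : Fin 3, eval b (pderiv i (pderiv j f)) = 0) :
    ∀ s t : k, eval (s • a + t • b) f = 0 := by
  intro s t
  by_cases hs : s = 0
  · subst hs
    rw [zero_smul, zero_add, eval_smul_aux 5 f hhom]
    have hb0 : eval b f = 0 := by
      have := line_eval_zero f hhom b a hb ha 0
      rwa [zero_smul, add_zero] at this
    rw [hb0, mul_zero]
  · have hkey := line_eval_zero f hhom a b ha hb (s⁻¹ * t)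
    have hsm : s • (a + (s⁻¹ * t) • b) = s • a + t • b := by
      rw [smul_add, smul_smul, mul_inv_cancel_left₀ hs]
    rw [← hsm, eval_smul_aux 5 f hhom, hkey, mul_zero]
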